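/- The dual function φ(λ, μ) = −(1/(2γ)) Σ_{i,j} ([−c_{ij} − λ_i − μ_j]_+)² − λᵀa − μᵀb is concave and continuously differentiable on ℝⁿ × ℝᵐ, with ∇_λ φ(λ, μ) = X(λ, μ) 1_m − a and ∇_μ φ(λ, μ) = X(λ, μ)ᵀ 1_n − b. -/

import Mathlib

open Finset MeasureTheory

noncomputable section

lemma hg_deriv (t : ℝ) : HasDerivAt (fun x : ℝ => (max 0 x)^2) (2 * max 0 t) t := by
  rcases lt_trichotomy t 0 with h | h | h
  · have he : (fun x : ℝ => (max 0 x)^2) =ᶠ[nhds t] (fun _ => (0:ℝ)) := by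
      filter_upwards [eventually_lt_nhds h] with x hx
      simp [max_eq_left hx.le]
    have h0 : HasDerivAt (fun _ : ℝ => (0:ℝ)) 0 t := hasDerivAt_const t 0
    have := h0.congr_of_eventuallyEq he
    simpa [max_eq_left h.le] using this
  · subst h
    rw [hasDerivAt_iff_isLittleO, Asymptotics.isLittleO_iff]
    intro c hc
    have hev : ∀ᶠ x : ℝ in nhds 0, |x| < c := by
      filter_upwards [Metric.ball_mem_nhds (0:ℝ) hc] with x hx
      simpa [Real.dist_eq] using hx
    filter_upwards [hev] with x hx
    have h1 : |max 0 x| ≤ |x| := by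
      rcases le_total x 0 with h | h
      · simp [max_eq_left h]
      · simp [max_eq_right h, abs_of_nonneg h]
    have heq : ‖(max 0 x)^2 - (max 0 (0:ℝ))^2 - (x - 0) • (2 * max 0 (0:ℝ))‖
        = |max 0 x| * |max 0 x| := by
      simp [sq, abs_mul]
    rw [heq]
    calc |max 0 x| * |max 0 x| ≤ c * |x| :=
          mul_le_mul (le_of_lt (lt_of_le_of_lt h1 hx)) h1 (abs_nonneg _) hc.le
      _ ≤ c * ‖x - 0‖ := by simp [Real.norm_eq_abs]
  · have he : (fun x : ℝ => (max 0 x)^2) =ᶠ[nhds t] (fun x => x^2) := by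
      filter_upwards [eventually_gt_nhds h] with x hx
      simp [max_eq_right hx.le]
    have h0 : HasDerivAt (fun x : ℝ => x^2) (2*t) t := by
      simpa using (hasDerivAt_pow 2 t)
    have := h0.congr_of_eventuallyEq he
    simpa [max_eq_right h.le] using this

lemma gconv_ineq (x y α β : ℝ) (hα : 0 ≤ α) (hβ : 0 ≤ β) (hαβ : α + β = 1) :
    (max 0 (α * x + β * y))^2 ≤ α * (max 0 x)^2 + β * (max 0 y)^2 := by
  have h2 : ConvexOn ℝ (Set.univ : Set ℝ) (fun t : ℝ => t^2) := Even.convexOn_pow even_two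
  have hmax : max 0 (α * x + β * y) ≤ α * max 0 x + β * max 0 y := by
    apply max_le
    · exact add_nonneg (mul_nonneg hα (le_max_left _ _)) (mul_nonneg hβ (le_max_left _ _))
    · exact add_le_add (mul_le_mul_of_nonneg_left (le_max_right _ _) hα)
        (mul_le_mul_of_nonneg_left (le_max_right _ _) hβ)
  calc (max 0 (α * x + β * y))^2 ≤ (α * max 0 x + β * max 0 y)^2 :=
        pow_le_pow_left₀ (le_max_left _ _) hmax 2
    _ ≤ α * (max 0 x)^2 + β * (max 0 y)^2 := by
        have := h2.2 (Set.mem_univ (max 0 x)) (Set.mem_univ (max 0 y)) hα hβ hαβ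
        simpa [smul_eq_mul] using this



namespace OT

def inn {n m : ℕ} (C X : Matrix (Fin n) (Fin m) ℝ) : ℝ := ∑ i, ∑ j, C i j * X i j

def nsq {n m : ℕ} (X : Matrix (Fin n) (Fin m) ℝ) : ℝ := ∑ i, ∑ j, (X i j) ^ 2

def l1m {n m : ℕ} (X : Matrix (Fin n) (Fin m) ℝ) : ℝ := ∑ i, ∑ j, |X i j|

def rowSum {n m : ℕ} (X : Matrix (Fin n) (Fin m) ℝ) (i : Fin n) : ℝ := ∑ j, X i j

def colSum {n m : ℕ} (X : Matrix (Fin n) (Fin m) ℝ) (j : Fin m) : ℝ := ∑ i, X i j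

def fobj {n m : ℕ} (C : Matrix (Fin n) (Fin m) ℝ) (γ : ℝ) (X : Matrix (Fin n) (Fin m) ℝ) : ℝ :=
  inn C X + γ / 2 * nsq X

def Lag {n m : ℕ} (C : Matrix (Fin n) (Fin m) ℝ) (γ : ℝ) (a : Fin n → ℝ) (b : Fin m → ℝ)
    (X : Matrix (Fin n) (Fin m) ℝ) (lam : Fin n → ℝ) (mu : Fin m → ℝ) : ℝ :=
  inn C X + γ / 2 * nsq X + (∑ i, lam i * (rowSum X i - a i)) + (∑ j, mu j * (colSum X j - b j))

def plan {n m : ℕ} (C : Matrix (Fin n) (Fin m) ℝ) (γ : ℝ) (lam : Fin n → ℝ) (mu : Fin m → ℝ) :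
    Matrix (Fin n) (Fin m) ℝ :=
  fun i j => max 0 (-(C i j) - lam i - mu j) / γ

def phi {n m : ℕ} (C : Matrix (Fin n) (Fin m) ℝ) (γ : ℝ) (a : Fin n → ℝ) (b : Fin m → ℝ)
    (lam : Fin n → ℝ) (mu : Fin m → ℝ) : ℝ :=
  -(1 / (2 * γ)) * (∑ i, ∑ j, (max 0 (-(C i j) - lam i - mu j)) ^ 2)
    - (∑ i, lam i * a i) - (∑ j, mu j * b j)

def memU {n m : ℕ} (a : Fin n → ℝ) (b : Fin m → ℝ) (X : Matrix (Fin n) (Fin m) ℝ) : Prop :=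
  (∀ i j, 0 ≤ X i j) ∧ (∀ i, rowSum X i = a i) ∧ (∀ j, colSum X j = b j)

def Cinf {n m : ℕ} (C : Matrix (Fin n) (Fin m) ℝ) : ℝ := ⨆ p : Fin n × Fin m, C p.1 p.2

def Rbound {n m : ℕ} (C : Matrix (Fin n) (Fin m) ℝ) (γ : ℝ) (a : Fin n → ℝ) (b : Fin m → ℝ) : ℝ :=
  Cinf C + γ / (min (n : ℝ) (m : ℝ)) * (1 - max (⨆ i, a i) (⨆ j, b j))

end OT

open OT in
theorem stmt2 {n m : ℕ} (hn : 0 < n) (hm : 0 < m)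
    (a : Fin n → ℝ) (b : Fin m → ℝ) (ha : ∀ i, 0 ≤ a i) (ha1 : ∑ i, a i = 1)
    (hb : ∀ j, 0 ≤ b j) (hb1 : ∑ j, b j = 1)
    (C : Matrix (Fin n) (Fin m) ℝ) (hC : ∀ i j, 0 ≤ C i j)
    (γ : ℝ) (hγ : 0 < γ) :
    ConcaveOn ℝ Set.univ (fun p : (Fin n → ℝ) × (Fin m → ℝ) => phi C γ a b p.1 p.2) ∧
    ContDiff ℝ 1 (fun p : (Fin n → ℝ) × (Fin m → ℝ) => phi C γ a b p.1 p.2) ∧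
    ∀ p : (Fin n → ℝ) × (Fin m → ℝ), ∃ D : ((Fin n → ℝ) × (Fin m → ℝ)) →L[ℝ] ℝ,
      HasFDerivAt (fun q : (Fin n → ℝ) × (Fin m → ℝ) => phi C γ a b q.1 q.2) D p ∧
      ∀ q : (Fin n → ℝ) × (Fin m → ℝ),
        D q = (∑ i, (rowSum (plan C γ p.1 p.2) i - a i) * q.1 i)
          + ∑ j, (colSum (plan C γ p.1 p.2) j - b j) * q.2 j := by
  have hγ' : (γ : ℝ) ≠ 0 := ne_of_gt hγ
  -- basic CLMs
  set E := (Fin n → ℝ) × (Fin m → ℝ)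
  let P : Fin n → (E →L[ℝ] ℝ) := fun i =>
    (ContinuousLinearMap.proj i).comp (ContinuousLinearMap.fst ℝ (Fin n → ℝ) (Fin m → ℝ))
  let Q : Fin m → (E →L[ℝ] ℝ) := fun j =>
    (ContinuousLinearMap.proj j).comp (ContinuousLinearMap.snd ℝ (Fin n → ℝ) (Fin m → ℝ))
  let A1 : E →L[ℝ] ℝ := ∑ i, a i • P i
  let A2 : E →L[ℝ] ℝ := ∑ j, b j • Q j
  let M : E → Fin n → Fin m → ℝ := fun p i j => max 0 (-(C i j) - p.1 i - p.2 j)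
  let Dtot : E → (E →L[ℝ] ℝ) := fun p =>
    (-(1 / (2 * γ))) • (∑ i, ∑ j, (2 * M p i j) • ((0 : E →L[ℝ] ℝ) - P i - Q j)) - A1 - A2
  have hPapp : ∀ (i : Fin n) (q : E), P i q = q.1 i := fun i q => rfl
  have hQapp : ∀ (j : Fin m) (q : E), Q j q = q.2 j := fun j q => rfl
  -- derivative of the quadratic sum
  have hS : ∀ p : E, HasFDerivAt (fun q : E => ∑ i, ∑ j, (max 0 (-(C i j) - q.1 i - q.2 j)) ^ 2)
      (∑ i, ∑ j, (2 * M p i j) • ((0 : E →L[ℝ] ℝ) - P i - Q j)) p := by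
    intro p
    apply HasFDerivAt.fun_sum
    intro i _
    apply HasFDerivAt.fun_sum
    intro j _
    have hAff : HasFDerivAt (fun q : E => -(C i j) - q.1 i - q.2 j)
        ((0 : E →L[ℝ] ℝ) - P i - Q j) p :=
      (((hasFDerivAt_const (-(C i j)) p).sub (P i).hasFDerivAt).sub (Q j).hasFDerivAt)
    exact (hg_deriv (-(C i j) - p.1 i - p.2 j)).comp_hasFDerivAt p hAff
  have hA1 : ∀ p : E, HasFDerivAt (fun q : E => ∑ i, q.1 i * a i) A1 p := by
    intro p
    have heq : (fun q : E => ∑ i, q.1 i * a i) = ⇑A1 := by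
      funext q
      simp [A1, ContinuousLinearMap.sum_apply, hPapp, mul_comm]
    rw [heq]; exact A1.hasFDerivAt
  have hA2 : ∀ p : E, HasFDerivAt (fun q : E => ∑ j, q.2 j * b j) A2 p := by
    intro p
    have heq : (fun q : E => ∑ j, q.2 j * b j) = ⇑A2 := by
      funext q
      simp [A2, ContinuousLinearMap.sum_apply, hQapp, mul_comm]
    rw [heq]; exact A2.hasFDerivAt
  have hphi : ∀ p : E, HasFDerivAt (fun q : E => phi C γ a b q.1 q.2) (Dtot p) p := by
    intro p
    simp only [phi]
    exact (((hS p).const_mul (-(1 / (2 * γ)))).sub (hA1 p)).sub (hA2 p)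
  -- value of the derivative
  have hDval : ∀ p q : E, Dtot p q = (∑ i, (rowSum (plan C γ p.1 p.2) i - a i) * q.1 i)
      + ∑ j, (colSum (plan C γ p.1 p.2) j - b j) * q.2 j := by
    intro p q
    have hL : Dtot p q = -(1 / (2 * γ)) * (∑ i, ∑ j, (2 * M p i j) * (0 - q.1 i - q.2 j))
        - (∑ i, a i * q.1 i) - (∑ j, b j * q.2 j) := by
      simp [Dtot, A1, A2, ContinuousLinearMap.sum_apply, ContinuousLinearMap.sub_apply,
        ContinuousLinearMap.smul_apply, hPapp, hQapp, smul_eq_mul]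
    rw [hL]
    have e1 : -(1 / (2 * γ)) * (∑ i, ∑ j, (2 * M p i j) * (0 - q.1 i - q.2 j))
        = ∑ i, ∑ j, (M p i j / γ * q.1 i + M p i j / γ * q.2 j) := by
      rw [Finset.mul_sum]
      refine Finset.sum_congr rfl fun i _ => ?_
      rw [Finset.mul_sum]
      refine Finset.sum_congr rfl fun j _ => ?_
      field_simp
      ring
    rw [e1]
    simp only [rowSum, colSum, plan, sub_mul, Finset.sum_sub_distrib, Finset.sum_mul,
      Finset.sum_add_distrib]
    rw [Finset.sum_comm (f := fun i j => M p i j / γ * q.2 j)]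
    simp only [M]
    ring
  refine ⟨?_, ?_, fun p => ⟨Dtot p, hphi p, hDval p⟩⟩
  · -- concavity
    refine ⟨convex_univ, ?_⟩
    intro x _ y _ α β hα hβ hαβ
    simp only [smul_eq_mul, phi]
    have hSle : (∑ i, ∑ j, (max 0 (-(C i j) - (α • x + β • y).1 i - (α • x + β • y).2 j)) ^ 2)
        ≤ α * (∑ i, ∑ j, (max 0 (-(C i j) - x.1 i - x.2 j)) ^ 2)
          + β * (∑ i, ∑ j, (max 0 (-(C i j) - y.1 i - y.2 j)) ^ 2) := by
      rw [Finset.mul_sum, Finset.mul_sum, ← Finset.sum_add_distrib]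
      refine Finset.sum_le_sum fun i _ => ?_
      rw [Finset.mul_sum, Finset.mul_sum, ← Finset.sum_add_distrib]
      refine Finset.sum_le_sum fun j _ => ?_
      have harg : -(C i j) - (α • x + β • y).1 i - (α • x + β • y).2 j
          = α * (-(C i j) - x.1 i - x.2 j) + β * (-(C i j) - y.1 i - y.2 j) := by
        simp only [Prod.fst_add, Prod.snd_add, Prod.smul_fst, Prod.smul_snd, Pi.add_apply,
          Pi.smul_apply, smul_eq_mul]
        have : α * (-(C i j)) + β * (-(C i j)) = -(C i j) := by
          rw [← add_mul, hαβ]; ring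
        nlinarith [this]
      rw [harg]
      exact gconv_ineq _ _ α β hα hβ hαβ
    have hLin1 : (∑ i, (α • x + β • y).1 i * a i)
        = α * (∑ i, x.1 i * a i) + β * (∑ i, y.1 i * a i) := by
      rw [Finset.mul_sum, Finset.mul_sum, ← Finset.sum_add_distrib]
      refine Finset.sum_congr rfl fun i _ => ?_
      simp only [Prod.fst_add, Prod.smul_fst, Pi.add_apply, Pi.smul_apply, smul_eq_mul]
      ring
    have hLin2 : (∑ j, (α • x + β • y).2 j * b j)
        = α * (∑ j, x.2 j * b j) + β * (∑ j, y.2 j * b j) := by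
      rw [Finset.mul_sum, Finset.mul_sum, ← Finset.sum_add_distrib]
      refine Finset.sum_congr rfl fun j _ => ?_
      simp only [Prod.snd_add, Prod.smul_snd, Pi.add_apply, Pi.smul_apply, smul_eq_mul]
      ring
    rw [hLin1, hLin2]
    have hc : 0 ≤ 1 / (2 * γ) := by positivity
    nlinarith [mul_le_mul_of_nonneg_left hSle hc]
  · -- C¹
    rw [contDiff_one_iff_fderiv]
    constructor
    · exact fun p => (hphi p).differentiableAt
    · have hfd : (fderiv ℝ (fun q : E => phi C γ a b q.1 q.2)) = Dtot :=
        funext fun p => (hphi p).fderiv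
      rw [hfd]
      have hMcont : ∀ (i : Fin n) (j : Fin m), Continuous (fun p : E => 2 * M p i j) := by
        intro i j
        apply Continuous.mul continuous_const
        apply Continuous.max continuous_const
        exact ((continuous_const.sub ((continuous_apply i).comp continuous_fst)).sub
          ((continuous_apply j).comp continuous_snd))
      apply Continuous.sub
      apply Continuous.sub
      · apply Continuous.fun_const_smul
        apply continuous_finset_sum
        intro i _
        apply continuous_finset_sum
        intro j _
        exact (hMcont i j).smul continuous_const
      · exact continuous_const
      · exact continuous_const
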